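/- arXiv:1511.07954 — 5 statements merged into one kernel-verified Lean document; each statement's English description precedes it below -/
import Mathlib

section
/- If p is a polynomial with complex coefficients satisfying p(1/r) = p(r)/r^{2m} for all nonzero r (a generalized self-reciprocal polynomial of reciprocal order 2m), then there exists a polynomial q such that p(r) = r^m · q((r + 1/r)/2) for all nonzero r. -/
open Polynomial Finset

lemma cheb_eval_aux (j : ℕ) (r : ℂ) (hr : r ≠ 0) :
    (Polynomial.Chebyshev.T ℂ j).eval ((r + r⁻¹) / 2) = (r ^ j + r⁻¹ ^ j) / 2 := by
  induction j using Nat.twoStepInduction with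
  | zero => simp [Polynomial.Chebyshev.T_zero]
  | one => simp [Polynomial.Chebyshev.T_one]
  | more j ih1 ih2 =>
    have h : ((j + 2 : ℕ) : ℤ) = (j : ℤ) + 2 := by push_cast; ring
    rw [h, Polynomial.Chebyshev.T_add_two]
    have h1 : ((j + 1 : ℕ) : ℤ) = (j : ℤ) + 1 := by push_cast; ring
    rw [← h1]
    simp only [eval_sub, eval_mul, eval_ofNat, eval_X]
    rw [ih2, ih1]
    have hs : r * r⁻¹ = 1 := mul_inv_cancel₀ hr
    have hpow2 : r⁻¹ ^ (j + 2) = r⁻¹ ^ (j + 1) * r⁻¹ := by ring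
    have hpow2' : r ^ (j + 2) = r ^ (j + 1) * r := by ring
    linear_combination ((r ^ j + r⁻¹ ^ j) / 2) * hs

theorem generalized_self_reciprocal_factor (p : Polynomial ℂ) (m : ℕ)
    (hp : ∀ r : ℂ, r ≠ 0 → p.eval r⁻¹ = p.eval r / r ^ (2 * m)) :
    ∃ q : Polynomial ℂ, ∀ r : ℂ, r ≠ 0 →
      p.eval r = r ^ m * q.eval ((r + r⁻¹) / 2) := by
  set d := p.natDegree with hd
  -- key polynomial identity
  have E : (X : ℂ[X]) ^ (2 * m) * p.reverse = X ^ d * p := by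
    apply Polynomial.eq_of_infinite_eval_eq
    apply Set.Infinite.mono (s := {x : ℂ | x ≠ 0})
    · intro r hr
      simp only [Set.mem_setOf_eq] at hr ⊢
      have hrev : p.reverse.eval r = p.eval r⁻¹ * r ^ d := by
        have : Invertible (r⁻¹) := invertibleOfNonzero (inv_ne_zero hr)
        have h := Polynomial.eval₂_reverse_mul_pow (RingHom.id ℂ) r⁻¹ p
        rw [invOf_eq_inv, inv_inv] at h
        have h' : p.reverse.eval r * r⁻¹ ^ p.natDegree = p.eval r⁻¹ := h
        rw [← h', mul_assoc, ← mul_pow, inv_mul_cancel₀ hr, one_pow, mul_one]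
      simp only [eval_mul, eval_pow, eval_X]
      rw [hrev, hp r hr]
      field_simp
    · have h0 : ({(0 : ℂ)} : Set ℂ).Finite := Set.finite_singleton 0
      have h1 := h0.infinite_compl
      have h2 : ({(0 : ℂ)} : Set ℂ)ᶜ = {x : ℂ | x ≠ 0} := by
        ext x; simp
      rwa [h2] at h1
  have hdle : d ≤ 2 * m := by
    by_cases hp0 : p = 0
    · simp [hd, hp0]
    · have hrev0 : p.reverse ≠ 0 := by simpa [Polynomial.reverse_eq_zero] using hp0
      have h1 : ((X : ℂ[X]) ^ (2 * m) * p.reverse).natDegree = p.reverse.natDegree + 2 * m :=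
        natDegree_X_pow_mul (p := p.reverse) (n := 2 * m) hrev0
      have h2 : ((X : ℂ[X]) ^ d * p).natDegree = d + d :=
        natDegree_X_pow_mul (p := p) (n := d) hp0
      have h3 := h1.symm.trans (E ▸ h2)
      have hrle := p.reverse_natDegree_le
      omega
  have hsym : ∀ k, k ≤ 2 * m → p.coeff k = p.coeff (2 * m - k) := by
    intro k hk
    have h := congrArg (fun q : ℂ[X] => q.coeff (d + k)) E
    simp only [coeff_X_pow_mul'] at h
    rw [if_pos (by omega : d ≤ d + k)] at h
    simp only [add_tsub_cancel_left] at h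
    by_cases hc : 2 * m ≤ d + k
    · rw [if_pos hc, Polynomial.coeff_reverse,
        Polynomial.revAt_le (by omega : d + k - 2 * m ≤ d)] at h
      rw [← h]
      congr 1
      omega
    · rw [if_neg hc] at h
      have h1 : p.coeff k = 0 := h.symm
      have h2 : p.coeff (2 * m - k) = 0 := by
        apply Polynomial.coeff_eq_zero_of_natDegree_lt
        omega
      rw [h1, h2]
  -- define q
  refine ⟨C (p.coeff m) + ∑ j ∈ range m, C (2 * p.coeff (m + 1 + j)) * Chebyshev.T ℂ (j + 1),
    fun r hr => ?_⟩
  have heval : p.eval r = ∑ k ∈ range (2 * m + 1), p.coeff k * r ^ k :=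
    Polynomial.eval_eq_sum_range' (by omega) r
  have hqeval : ((C (p.coeff m) + ∑ j ∈ range m,
      C (2 * p.coeff (m + 1 + j)) * Chebyshev.T ℂ (j + 1)).eval ((r + r⁻¹) / 2))
      = p.coeff m + ∑ j ∈ range m,
        p.coeff (m + 1 + j) * (r ^ (j + 1) + r⁻¹ ^ (j + 1)) := by
    rw [eval_add, eval_C, eval_finset_sum]
    congr 1
    apply Finset.sum_congr rfl
    intro j _
    rw [eval_mul, eval_C]
    have hcast : ((j : ℤ) + 1) = ((j + 1 : ℕ) : ℤ) := by push_cast; ring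
    rw [hcast, cheb_eval_aux (j + 1) r hr]
    ring
  rw [heval, hqeval]
  -- split the sum
  have hsplit : ∑ k ∈ range (2 * m + 1), p.coeff k * r ^ k =
      (∑ k ∈ range m, p.coeff k * r ^ k) +
      ∑ k ∈ range (m + 1), p.coeff (m + k) * r ^ (m + k) := by
    have hA : ∑ k ∈ range (m + 1), p.coeff (m + k) * r ^ (m + k) =
        ∑ i ∈ Ico m (2 * m + 1), (fun k => p.coeff k * r ^ k) i := by
      rw [Finset.sum_Ico_eq_sum_range]
      have h2 : 2 * m + 1 - m = m + 1 := by omega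
      rw [h2]
    rw [hA, Finset.range_eq_Ico,
      ← Finset.sum_Ico_consecutive (fun k => p.coeff k * r ^ k)
        (Nat.zero_le m) (by omega : m ≤ 2 * m + 1)]
    rw [Finset.range_eq_Ico]
  rw [hsplit, Finset.sum_range_succ' (fun k => p.coeff (m + k) * r ^ (m + k)) m]
  have hlow : ∑ k ∈ range m, p.coeff k * r ^ k =
      ∑ j ∈ range m, p.coeff (m + 1 + j) * r ^ (m - 1 - j) := by
    rw [← Finset.sum_range_reflect]
    apply Finset.sum_congr rfl
    intro j hj
    simp only [Finset.mem_range] at hj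
    have h1 : p.coeff (m - 1 - j) = p.coeff (m + 1 + j) := by
      rw [hsym (m - 1 - j) (by omega)]
      congr 1
      omega
    rw [h1]
  rw [hlow, mul_add, Finset.mul_sum]
  have hsum : (∑ j ∈ range m, p.coeff (m + 1 + j) * r ^ (m - 1 - j)) +
      ∑ k ∈ range m, p.coeff (m + (k + 1)) * r ^ (m + (k + 1)) =
      ∑ i ∈ range m, r ^ m * (p.coeff (m + 1 + i) * (r ^ (i + 1) + r⁻¹ ^ (i + 1))) := by
    rw [← Finset.sum_add_distrib]
    apply Finset.sum_congr rfl
    intro j hj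
    simp only [Finset.mem_range] at hj
    have hmj : m + (j + 1) = m + 1 + j := by omega
    rw [hmj]
    have hpow : r ^ m * r⁻¹ ^ (j + 1) = r ^ (m - 1 - j) := by
      rw [inv_pow, ← pow_sub₀ r hr (by omega : j + 1 ≤ m)]
      congr 1
      omega
    have h2 : r ^ (m + 1 + j) = r ^ m * r ^ (j + 1) := by
      rw [← pow_add]
      congr 1
      omega
    rw [h2, ← hpow]
    ring
  simp only [Nat.add_zero]
  linear_combination hsum
end

section
/- If p is a polynomial with complex coefficients satisfying p(1/r) = -p(r)/r^{2m} for all nonzero r (a generalized anti-self-reciprocal polynomial of reciprocal order 2m), then there exists a polynomial q such that p(r) = r^m · ((r - 1/r)/2) · q((r + 1/r)/2) for all nonzero r. -/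
open Polynomial Finset

lemma poly_eq_of_ne_zero {f g : Polynomial ℂ} (h : ∀ r : ℂ, r ≠ 0 → f.eval r = g.eval r) :
    f = g := by
  rw [← sub_eq_zero]
  apply Polynomial.eq_zero_of_infinite_isRoot
  apply Set.Infinite.mono (s := ({0}ᶜ : Set ℂ))
  · intro x hx
    simp only [Set.mem_setOf_eq, IsRoot, eval_sub, sub_eq_zero]
    exact h x hx
  · exact (Set.finite_singleton 0).infinite_compl

lemma reflect_eval (p : Polynomial ℂ) (N : ℕ) (hN : p.natDegree ≤ N) (r : ℂ) (hr : r ≠ 0) :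
    (p.reflect N).eval r = p.eval r⁻¹ * r ^ N := by
  haveI : Invertible (r⁻¹) := invertibleOfNonzero (inv_ne_zero hr)
  have h := Polynomial.eval₂_reflect_mul_pow (RingHom.id ℂ) (r⁻¹) N p hN
  rw [invOf_eq_inv, inv_inv] at h
  have h' : (p.reflect N).eval r * (r⁻¹) ^ N = p.eval r⁻¹ := h
  rw [← h']
  rw [mul_assoc, ← mul_pow, inv_mul_cancel₀ hr, one_pow, mul_one]

lemma cheb_eval (r : ℂ) (hr : r ≠ 0) (k : ℕ) :
    (r - r⁻¹) / 2 * (Polynomial.Chebyshev.U ℂ k).eval ((r + r⁻¹) / 2)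
      = (r ^ (k + 1) - r⁻¹ ^ (k + 1)) / 2 := by
  have hs : r * r⁻¹ = 1 := mul_inv_cancel₀ hr
  induction k using Nat.strong_induction_on with
  | _ k ih =>
    match k with
    | 0 => simp [Polynomial.Chebyshev.U_zero]
    | 1 =>
      rw [Nat.cast_one, Polynomial.Chebyshev.U_one]
      simp only [eval_mul, eval_ofNat, eval_X]
      ring
    | (n+2) =>
      have h1 := ih (n+1) (by omega)
      have h0 := ih n (by omega)
      have hU : Polynomial.Chebyshev.U ℂ ((n : ℤ) + 2)
          = 2 * X * Polynomial.Chebyshev.U ℂ ((n : ℤ) + 1) - Polynomial.Chebyshev.U ℂ n :=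
        Polynomial.Chebyshev.U_add_two ℂ n
      have hcast : ((n + 2 : ℕ) : ℤ) = (n : ℤ) + 2 := by push_cast; ring
      have hcast1 : ((n + 1 : ℕ) : ℤ) = (n : ℤ) + 1 := by push_cast; ring
      rw [hcast, hU]
      rw [hcast1] at h1
      simp only [eval_sub, eval_mul, eval_ofNat, eval_X]
      have expand : (r - r⁻¹) / 2 *
          (2 * ((r + r⁻¹) / 2) * (Polynomial.Chebyshev.U ℂ ((n:ℤ) + 1)).eval ((r + r⁻¹) / 2)
            - (Polynomial.Chebyshev.U ℂ (n:ℤ)).eval ((r + r⁻¹) / 2))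
          = 2 * ((r + r⁻¹) / 2) * ((r - r⁻¹) / 2 *
              (Polynomial.Chebyshev.U ℂ ((n:ℤ) + 1)).eval ((r + r⁻¹) / 2))
            - (r - r⁻¹) / 2 * (Polynomial.Chebyshev.U ℂ (n:ℤ)).eval ((r + r⁻¹) / 2) := by ring
      rw [expand, h1, h0]
      linear_combination ((r ^ (n+1) - r⁻¹ ^ (n+1)) / 2) * hs

theorem generalized_anti_self_reciprocal_factor (p : Polynomial ℂ) (m : ℕ)
    (hp : ∀ r : ℂ, r ≠ 0 → p.eval r⁻¹ = -(p.eval r / r ^ (2 * m))) :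
    ∃ q : Polynomial ℂ, ∀ r : ℂ, r ≠ 0 →
      p.eval r = r ^ m * ((r - r⁻¹) / 2) * q.eval ((r + r⁻¹) / 2) := by
  by_cases hp0 : p = 0
  · exact ⟨0, by simp [hp0]⟩
  -- degree bound
  have hdeg : p.natDegree ≤ 2 * m := by
    by_contra hd
    push_neg at hd
    have h1 : p.reflect p.natDegree = -(X ^ (p.natDegree - 2 * m) * p) := by
      apply poly_eq_of_ne_zero
      intro r hr
      rw [reflect_eval p p.natDegree le_rfl r hr, hp r hr]
      rw [show p.natDegree = (p.natDegree - 2 * m) + 2 * m by omega]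
      simp only [eval_neg, eval_mul, eval_pow, eval_X]
      field_simp
      ring
      rw [Nat.add_sub_cancel_left]
    have h2 := congrArg (fun f => Polynomial.coeff f 0) h1
    simp only [coeff_reflect, coeff_neg, Polynomial.mul_coeff_zero, coeff_X_pow] at h2
    rw [Polynomial.revAt_le (Nat.zero_le _)] at h2
    simp only [Nat.sub_zero] at h2
    have he : (0 : ℕ) ≠ p.natDegree - 2 * m := by omega
    rw [if_neg he] at h2
    simp at h2
    exact hp0 h2
  -- symmetry
  have hsym : p.reflect (2 * m) = -p := by
    apply poly_eq_of_ne_zero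
    intro r hr
    rw [reflect_eval p (2 * m) hdeg r hr, hp r hr, eval_neg]
    field_simp
  have hc : ∀ k, k ≤ 2 * m → p.coeff (2 * m - k) = -p.coeff k := by
    intro k hk
    have h2 := congrArg (fun f => Polynomial.coeff f k) hsym
    simpa [coeff_reflect, Polynomial.revAt_le hk] using h2
  have ham : p.coeff m = 0 := by
    have := hc m (by omega)
    rw [show 2 * m - m = m by omega] at this
    linear_combination this / 2
  refine ⟨∑ k ∈ Finset.range m, C (2 * p.coeff (m + 1 + k)) * Polynomial.Chebyshev.U ℂ k, ?_⟩
  intro r hr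
  have h2m : p.natDegree < 2 * m + 1 := Nat.lt_succ_of_le hdeg
  rw [Polynomial.eval_eq_sum_range' h2m]
  rw [show 2 * m + 1 = (m + 1) + m by ring, Finset.sum_range_add, Finset.sum_range_succ, ham,
    zero_mul, add_zero]
  rw [← Finset.sum_range_reflect (fun i => p.coeff i * r ^ i) m]
  rw [Polynomial.eval_finset_sum]
  simp only [eval_mul, eval_C]
  rw [Finset.mul_sum, ← Finset.sum_add_distrib]
  apply Finset.sum_congr rfl
  intro k hk
  rw [Finset.mem_range] at hk
  have hcoeff : p.coeff (m - 1 - k) = -p.coeff (m + 1 + k) := by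
    have := hc (m + 1 + k) (by omega)
    rwa [show 2 * m - (m + 1 + k) = m - 1 - k by omega] at this
  rw [hcoeff]
  have hre : r ^ m * ((r - r⁻¹) / 2) * (2 * p.coeff (m + 1 + k)
        * (Polynomial.Chebyshev.U ℂ k).eval ((r + r⁻¹) / 2))
      = r ^ m * 2 * p.coeff (m + 1 + k) *
        ((r - r⁻¹) / 2 * (Polynomial.Chebyshev.U ℂ k).eval ((r + r⁻¹) / 2)) := by ring
  rw [hre, cheb_eval r hr k]
  rw [show m - 1 - k = m - (k + 1) by omega, pow_sub₀ r hr (by omega : k + 1 ≤ m)]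
  field_simp
  have hs : r * r⁻¹ = 1 := mul_inv_cancel₀ hr
  have hk' : r ^ k * r⁻¹ ^ k = 1 := by rw [← mul_pow, hs, one_pow]
  linear_combination (p.coeff (m + 1 + k) * r ^ m * r ^ k * r⁻¹ ^ k) * hs + (p.coeff (m + 1 + k) * r ^ m) * hk'
end

section
/- Let N ≥ 2 and let 0 = β_0 < β_1 < ... < β_{N-1} < 2π be real numbers, with β_N := 2π and γ_j := (β_j + β_{j+1})/2 for j = 0,...,N-1. For indices i, j ∈ {1,...,N-1} with 2 ≤ j ≤ i-1 and θ ∈ [γ_{i-1}, γ_i], one has cos(θ - β_i) ≥ cos(θ - β_j), with equality if and only if j = i-1 and θ = γ_{i-1}. -/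
open Real

theorem cos_angular_nearest (N : ℕ) (hN : 2 ≤ N) (β : ℕ → ℝ)
    (hβ0 : β 0 = 0) (hβN : β N = 2 * π)
    (hmono : ∀ k, k < N → β k < β (k + 1))
    (γ : ℕ → ℝ) (hγ : ∀ j, γ j = (β j + β (j + 1)) / 2)
    (i j : ℕ) (hi : i ≤ N - 1) (hj1 : 1 ≤ j) (hj2 : 2 ≤ j) (hji : j ≤ i - 1)
    (θ : ℝ) (hθ : θ ∈ Set.Icc (γ (i - 1)) (γ i)) :
    Real.cos (θ - β i) ≥ Real.cos (θ - β j) ∧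
      (Real.cos (θ - β i) = Real.cos (θ - β j) ↔ j = i - 1 ∧ θ = γ (i - 1)) := by
  have hi3 : 3 ≤ i := by omega
  have hiN : i < N := by omega
  have mono : ∀ b, b ≤ N → ∀ a, a < b → β a < β b := by
    intro b
    induction b with
    | zero => intro _ a h; omega
    | succ n ih =>
      intro hn a ha
      have h1 : β n < β (n + 1) := hmono n (by omega)
      rcases Nat.lt_succ_iff_lt_or_eq.mp ha with h | h
      · exact (ih (by omega) a h).trans h1
      · subst h; exact h1
  have hji' : j < i := by omega
  have hβji : β j < β i := mono i (by omega) j hji'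
  have hβjle : β j ≤ β (i - 1) := by
    rcases Nat.lt_or_ge j (i - 1) with h | h
    · exact le_of_lt (mono (i - 1) (by omega) j h)
    · have : j = i - 1 := by omega
      rw [this]
  have hβjpos : 0 < β j := by
    have := mono j (by omega) 0 (by omega)
    linarith [hβ0 ▸ this]
  have hβi1 : β (i + 1) ≤ 2 * π := by
    rcases Nat.lt_or_ge (i + 1) N with h | h
    · exact le_of_lt (hβN ▸ mono N le_rfl (i + 1) h)
    · have : i + 1 = N := by omega
      rw [this, hβN]
  have hβilt : β i < 2 * π := hβN ▸ mono N le_rfl i hiN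
  set A : ℝ := (β i - β j) / 2 with hA
  set B : ℝ := θ - (β i + β j) / 2 with hB
  have hid : Real.cos (θ - β i) - Real.cos (θ - β j) = 2 * Real.sin A * Real.sin B := by
    rw [Real.cos_sub_cos]
    have e1 : (θ - β i + (θ - β j)) / 2 = B := by rw [hB]; ring
    have e2 : (θ - β i - (θ - β j)) / 2 = -A := by rw [hA]; ring
    rw [e1, e2, Real.sin_neg]; ring
  have hApos : 0 < Real.sin A := by
    apply Real.sin_pos_of_pos_of_lt_pi
    · rw [hA]; linarith
    · rw [hA]; linarith [Real.pi_pos]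
  have hγi1 : γ (i - 1) = (β (i - 1) + β i) / 2 := by
    rw [hγ]; congr 3; omega
  have hBnonneg : 0 ≤ B := by
    have h1 := hθ.1
    rw [hγi1] at h1
    rw [hB]; linarith
  have hBltpi : B < π := by
    have h2 := hθ.2
    rw [hγ] at h2
    rw [hB]; linarith
  have hsinB : 0 ≤ Real.sin B := Real.sin_nonneg_of_nonneg_of_le_pi hBnonneg (le_of_lt hBltpi)
  constructor
  · nlinarith
  constructor
  · intro heq
    have hsB0 : Real.sin B = 0 := by nlinarith
    have hB0 : B = 0 := by
      by_contra h
      have : 0 < B := lt_of_le_of_ne hBnonneg (Ne.symm h)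
      exact absurd hsB0 (ne_of_gt (Real.sin_pos_of_pos_of_lt_pi this hBltpi))
    have hθeq : θ = (β i + β j) / 2 := by rw [hB] at hB0; linarith
    have h1 := hθ.1
    rw [hγi1] at h1
    have hβeq : β j = β (i - 1) := by linarith
    have hjeq : j = i - 1 := by
      by_contra h
      have : j < i - 1 := by omega
      exact absurd hβeq (ne_of_lt (mono (i - 1) (by omega) j this))
    exact ⟨hjeq, by rw [hγi1, hθeq, hjeq]; ring⟩
  · rintro ⟨hjeq, hθeq⟩
    have : B = 0 := by rw [hB, hθeq, hγi1, hjeq]; ring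
    have : Real.sin B = 0 := by rw [this, Real.sin_zero]
    nlinarith
end

section
/- Let 0 = β_0 < β_1 < ... < β_{N-1} < 2π with β_N := 2π, γ_j := (β_j + β_{j+1})/2, and I_1 := [γ_0, γ_1]. If (u, θ) satisfies θ ∈ I_1 and u > max over all j of cos(θ - β_j), then u > min over all j ∈ {0,...,N-1} of cos((β_{j+1} - β_j)/2). -/
open Real

theorem cos_gap_bound (N : ℕ) (hN : 2 ≤ N) (β : ℕ → ℝ)
    (hβ0 : β 0 = 0) (hβN : β N = 2 * π)
    (hmono : ∀ k, k < N → β k < β (k + 1))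
    (γ : ℕ → ℝ) (hγ : ∀ j, γ j = (β j + β (j + 1)) / 2)
    (u θ : ℝ) (hθ : θ ∈ Set.Icc (γ 0) (γ 1))
    (hu : ∀ j, j < N → Real.cos (θ - β j) < u) :
    ∃ j, j < N ∧ Real.cos ((β (j + 1) - β j) / 2) < u := by
  have hle : ∀ a b : ℕ, a ≤ b → b ≤ N → β a ≤ β b := by
    intro a b hab hbN
    induction b with
    | zero => simp_all
    | succ n ih =>
      rcases Nat.lt_or_ge a (n+1) with h | h
      · exact le_trans (ih (Nat.lt_succ_iff.mp h) (le_trans (Nat.le_succ n) hbN))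
          (le_of_lt (hmono n (Nat.lt_of_succ_le hbN)))
      · have : a = n + 1 := le_antisymm hab h
        simp [this]
  have h01 : β 0 < β 1 := hmono 0 (by omega)
  have h12 : β 1 < β 2 := hmono 1 (by omega)
  have h2N : β 2 ≤ 2 * π := hβN ▸ hle 2 N hN le_rfl
  have hpi : (0:ℝ) < π := Real.pi_pos
  have hθ0 := hθ.1
  have hθ1 := hθ.2
  rw [hγ 0] at hθ0
  rw [hγ 1] at hθ1
  have h1N : 1 < N := by omega
  have hu1 := hu 1 h1N
  rcases le_total θ (β 1) with h | h
  · refine ⟨0, by omega, ?_⟩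
    have hβ1pos : 0 < β 1 := by rw [← hβ0]; exact h01
    have hhalf : (β 1 - β 0) / 2 ≤ π := by nlinarith
    have h1 : β 1 - θ ≤ (β 1 - β 0) / 2 := by linarith
    have h2 : 0 ≤ β 1 - θ := by linarith
    have := Real.cos_le_cos_of_nonneg_of_le_pi h2 hhalf h1
    calc Real.cos ((β (0+1) - β 0) / 2) ≤ Real.cos (β 1 - θ) := by simpa using this
      _ = Real.cos (θ - β 1) := by rw [← Real.cos_neg]; ring_nf
      _ < u := hu1
  · refine ⟨1, h1N, ?_⟩
    have hβ1pos : 0 < β 1 := by rw [← hβ0]; exact h01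
    have hhalf : (β 2 - β 1) / 2 ≤ π := by nlinarith
    have h1 : θ - β 1 ≤ (β 2 - β 1) / 2 := by linarith
    have h2 : 0 ≤ θ - β 1 := by linarith
    have := Real.cos_le_cos_of_nonneg_of_le_pi h2 hhalf h1
    calc Real.cos ((β (1+1) - β 1) / 2) ≤ Real.cos (θ - β 1) := by simpa using this
      _ < u := hu1
end

section
/- Let n ≥ 2, let 0 = α_0 ≤ α_1 ≤ ... ≤ α_{2n-1} < 2π be real numbers, and set A_j := (-1)^{n+1} · 2^{-(2n-1)} · (∏_{i ≠ j} sin((α_j - α_i)/2))^{-1} for distinct angles α_j. Then ∑_{j=0}^{2n-1} A_j = 0, ∑_{j=0}^{2n-1} A_j cos((n-1)α_j) = 0, and ∑_{j=0}^{2n-1} A_j sin((n-1)α_j) = 0. -/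
open Polynomial Finset

lemma leadingCoeff_lagrange_basis {F : Type*} [Field F] {ι : Type*} [DecidableEq ι]
    {s : Finset ι} {v : ι → F} {i : ι} :
    (Lagrange.basis s v i).leadingCoeff = Lagrange.nodalWeight s v i := by
  rw [Lagrange.basis, Polynomial.leadingCoeff_prod, Lagrange.nodalWeight]
  refine Finset.prod_congr rfl fun j hj => ?_
  rw [Lagrange.basisDivisor, leadingCoeff_mul, leadingCoeff_C,
    (monic_X_sub_C (v j)).leadingCoeff, mul_one]

lemma lagrange_power_sum_eq_zero {F : Type*} [Field F] {ι : Type*} [DecidableEq ι]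
    {s : Finset ι} {v : ι → F} (hvs : Set.InjOn v s) {k : ℕ} (hk : k + 1 < s.card) :
    ∑ j ∈ s, (v j) ^ k * Lagrange.nodalWeight s v j = 0 := by
  have hdeg : (X ^ k : F[X]).degree < s.card := by
    rw [degree_X_pow]; exact_mod_cast Nat.lt_of_succ_lt hk
  have h := Lagrange.eq_interpolate (v := v) hvs hdeg
  have h2 := congrArg (fun p : F[X] => p.coeff (s.card - 1)) h
  simp only [Lagrange.interpolate_apply, finset_sum_coeff, coeff_C_mul, eval_pow, eval_X,
    coeff_X_pow] at h2
  rw [if_neg (by omega)] at h2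
  have h3 : ∀ j ∈ s, (Lagrange.basis s v j).coeff (s.card - 1) = Lagrange.nodalWeight s v j := by
    intro j hj
    rw [← Lagrange.natDegree_basis hvs hj, coeff_natDegree, leadingCoeff_lagrange_basis]
  calc ∑ j ∈ s, v j ^ k * Lagrange.nodalWeight s v j
      = ∑ j ∈ s, v j ^ k * (Lagrange.basis s v j).coeff (s.card - 1) :=
        Finset.sum_congr rfl fun j hj => by rw [h3 j hj]
    _ = 0 := h2.symm

lemma exp_sub_exp' (a b : ℂ) :
    Complex.exp (a * Complex.I) - Complex.exp (b * Complex.I) =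
      2 * Complex.I * Complex.sin ((a - b) / 2) * Complex.exp ((a + b) / 2 * Complex.I) := by
  have h1 : Complex.exp (a * Complex.I) =
      Complex.exp ((a - b) / 2 * Complex.I) * Complex.exp ((a + b) / 2 * Complex.I) := by
    rw [← Complex.exp_add]; ring_nf
  have h2 : Complex.exp (b * Complex.I) =
      Complex.exp (-((a - b) / 2) * Complex.I) * Complex.exp ((a + b) / 2 * Complex.I) := by
    rw [← Complex.exp_add]; ring_nf
  rw [h1, h2, Complex.sin]; ring_nf; rw [Complex.I_sq]; ring

open Real

theorem residue_sums_vanish (n : ℕ) (hn : 2 ≤ n) (α : Fin (2 * n) → ℝ)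
    (hα0 : α ⟨0, by omega⟩ = 0) (hαlt : ∀ j, α j < 2 * π)
    (hmono : StrictMono α)
    (A : Fin (2 * n) → ℝ)
    (hA : ∀ j, A j = (-1 : ℝ) ^ (n + 1) / 2 ^ (2 * n - 1) *
      (∏ i ∈ Finset.univ.erase j, Real.sin ((α j - α i) / 2))⁻¹) :
    (∑ j, A j) = 0 ∧
      (∑ j, A j * Real.cos (((n : ℝ) - 1) * α j)) = 0 ∧
      (∑ j, A j * Real.sin (((n : ℝ) - 1) * α j)) = 0 := by
  have hπ := Real.pi_pos
  set z : Fin (2 * n) → ℂ := fun j => Complex.exp ((α j : ℂ) * Complex.I) with hz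
  set S : ℝ := ∑ i, α i with hS
  have hα_nonneg : ∀ j, 0 ≤ α j := by
    intro j
    have h0j : (⟨0, by omega⟩ : Fin (2 * n)) ≤ j := by simp [Fin.le_def]
    calc (0:ℝ) = α ⟨0, by omega⟩ := hα0.symm
      _ ≤ α j := hmono.monotone h0j
  have hzinj : Function.Injective z := by
    intro i j hij
    have h1 : Complex.exp (((α i - α j : ℝ) : ℂ) * Complex.I) = 1 := by
      push_cast
      rw [sub_mul, Complex.exp_sub, div_eq_one_iff_eq (Complex.exp_ne_zero _)]
      exact hij
    rw [Complex.exp_eq_one_iff] at h1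
    obtain ⟨k, hk⟩ := h1
    have hk' : α i - α j = k * (2 * π) := by
      have h2 : ((α i - α j : ℝ) : ℂ) * Complex.I = ((k * (2 * π) : ℝ) : ℂ) * Complex.I := by
        push_cast at hk ⊢
        linear_combination hk
      have h3 := mul_right_cancel₀ Complex.I_ne_zero h2
      exact_mod_cast h3
    have hbound : -1 < (k:ℝ) ∧ (k:ℝ) < 1 := by
      constructor <;> nlinarith [hαlt i, hαlt j, hα_nonneg i, hα_nonneg j]
    have hk0 : k = 0 := by
      have h1 : (-1:ℤ) < k := by exact_mod_cast hbound.1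
      have h2 : (k:ℤ) < 1 := by exact_mod_cast hbound.2
      omega
    apply hmono.injective
    have : α i - α j = 0 := by rw [hk', hk0]; push_cast; ring
    linarith
  have hvs : Set.InjOn z (Finset.univ : Finset (Fin (2*n))) := hzinj.injOn
  have hcard : (Finset.univ : Finset (Fin (2*n))).card = 2 * n := by simp
  -- the product factorization
  have hprod : ∀ j, ∏ i ∈ Finset.univ.erase j, (z j - z i) =
      (2 * Complex.I) ^ (2 * n - 1) *
        Complex.exp (((((n:ℝ) - 1) * α j + S / 2 : ℝ) : ℂ) * Complex.I) *
        ((∏ i ∈ Finset.univ.erase j, Real.sin ((α j - α i) / 2) : ℝ) : ℂ) := by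
    intro j
    have step : ∀ i ∈ Finset.univ.erase j, z j - z i =
        2 * Complex.I * ((Real.sin ((α j - α i) / 2) : ℝ) : ℂ) *
          Complex.exp ((((α j + α i) / 2 : ℝ) : ℂ) * Complex.I) := by
      intro i _
      show Complex.exp _ - Complex.exp _ = _
      rw [exp_sub_exp']
      push_cast
      ring
    have hcarde : (Finset.univ.erase j).card = 2 * n - 1 := by
      rw [Finset.card_erase_of_mem (Finset.mem_univ j), hcard]
    have hsum : ∑ i ∈ Finset.univ.erase j, ((((α j + α i) / 2 : ℝ)) : ℂ) * Complex.I =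
        ((((n:ℝ) - 1) * α j + S / 2 : ℝ) : ℂ) * Complex.I := by
      rw [← Finset.sum_mul]
      congr 1
      rw [← Complex.ofReal_sum]
      congr 1
      have h1 : ∑ i ∈ Finset.univ.erase j, α i = S - α j :=
        Finset.sum_erase_eq_sub (Finset.mem_univ j)
      rw [← Finset.sum_div, Finset.sum_add_distrib, Finset.sum_const, h1, hcarde]
      have h2 : ((2 * n - 1 : ℕ) : ℝ) = 2 * n - 1 := by
        push_cast [Nat.cast_sub (by omega : 1 ≤ 2 * n)]; ring
      rw [nsmul_eq_mul, h2]
      ring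
    rw [Finset.prod_congr rfl step, Finset.prod_mul_distrib, Finset.prod_mul_distrib,
      Finset.prod_const, ← Complex.exp_sum, hsum, hcarde]
    push_cast
    ring
  -- A in complex form
  have hAc : ∀ j, (A j : ℂ) = Complex.I * Complex.exp (((S / 2 : ℝ) : ℂ) * Complex.I) *
      Complex.exp (((((n:ℝ) - 1) * α j : ℝ) : ℂ) * Complex.I) *
      Lagrange.nodalWeight Finset.univ z j := by
    intro j
    have hW : Lagrange.nodalWeight Finset.univ z j =
        (∏ i ∈ Finset.univ.erase j, (z j - z i))⁻¹ := by
      rw [Lagrange.nodalWeight, ← Finset.prod_inv_distrib]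
    have hI : (Complex.I) ^ (2 * n - 1) = (-1 : ℂ) ^ (n + 1) * Complex.I := by
      have h : (Complex.I) ^ (2*n-1) * Complex.I = ((-1:ℂ)^(n+1) * Complex.I) * Complex.I := by
        rw [← pow_succ, show 2*n-1+1 = 2*n from by omega, pow_mul, Complex.I_sq,
          mul_assoc, Complex.I_mul_I, pow_succ]
        ring
      exact mul_right_cancel₀ Complex.I_ne_zero h
    have hc : ((-1:ℂ)) ^ (n+1) / 2 ^ (2*n-1) = Complex.I * ((2*Complex.I) ^ (2*n-1))⁻¹ := by
      rw [mul_pow, hI, mul_inv, mul_inv, Complex.inv_I]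
      have hinv : (((-1:ℂ)) ^ (n+1))⁻¹ = ((-1:ℂ)) ^ (n+1) := by
        rw [← inv_pow, inv_neg, inv_one]
      rw [hinv]
      linear_combination ((2:ℂ) ^ (2*n-1))⁻¹ * ((-1:ℂ)) ^ (n+1) * Complex.I_mul_I
    have hEsplit : Complex.exp (((((n:ℝ) - 1) * α j + S / 2 : ℝ) : ℂ) * Complex.I) =
        Complex.exp (((((n:ℝ) - 1) * α j : ℝ) : ℂ) * Complex.I) *
          Complex.exp (((S / 2 : ℝ) : ℂ) * Complex.I) := by
      rw [← Complex.exp_add]; congr 1; push_cast; ring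
    have hu0 : Complex.exp (((((n:ℝ) - 1) * α j : ℝ) : ℂ) * Complex.I) ≠ 0 :=
      Complex.exp_ne_zero _
    have hE0 : Complex.exp (((S / 2 : ℝ) : ℂ) * Complex.I) ≠ 0 := Complex.exp_ne_zero _
    rw [hA j, hW, hprod j, hEsplit]
    push_cast
    rw [mul_inv, mul_inv, mul_inv, hc]
    have he : Complex.exp ((S : ℂ) / 2 * Complex.I) *
        (Complex.exp ((S : ℂ) / 2 * Complex.I))⁻¹ = 1 := mul_inv_cancel₀ (Complex.exp_ne_zero _)
    have hu' : Complex.exp (((n : ℂ) - 1) * (α j : ℂ) * Complex.I) *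
        (Complex.exp (((n : ℂ) - 1) * (α j : ℂ) * Complex.I))⁻¹ = 1 :=
      mul_inv_cancel₀ (Complex.exp_ne_zero _)
    linear_combination
      (-(Complex.I * ((2*Complex.I) ^ (2*n-1))⁻¹ *
        (∏ i ∈ Finset.univ.erase j, Complex.sin (((α j : ℂ) - (α i : ℂ)) / 2))⁻¹ *
        (Complex.exp (((n : ℂ) - 1) * (α j : ℂ) * Complex.I) *
          (Complex.exp (((n : ℂ) - 1) * (α j : ℂ) * Complex.I))⁻¹))) * he +
      (-(Complex.I * ((2*Complex.I) ^ (2*n-1))⁻¹ *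
        (∏ i ∈ Finset.univ.erase j, Complex.sin (((α j : ℂ) - (α i : ℂ)) / 2))⁻¹)) * hu'
  have hu : ∀ j, Complex.exp (((((n:ℝ) - 1) * α j : ℝ) : ℂ) * Complex.I) = z j ^ (n - 1) := by
    intro j
    rw [show z j ^ (n-1) = Complex.exp (((n-1:ℕ):ℂ) * ((α j : ℂ) * Complex.I)) from
      (Complex.exp_nat_mul _ _).symm]
    congr 1
    push_cast [Nat.cast_sub (by omega : 1 ≤ n)]
    ring
  have hk1 : ∑ j, z j ^ (n - 1) * Lagrange.nodalWeight Finset.univ z j = 0 :=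
    lagrange_power_sum_eq_zero hvs (by rw [hcard]; omega)
  have hk2 : ∑ j, z j ^ (2 * n - 2) * Lagrange.nodalWeight Finset.univ z j = 0 :=
    lagrange_power_sum_eq_zero hvs (by rw [hcard]; omega)
  have hS1 : ((∑ j, A j : ℝ) : ℂ) = 0 := by
    push_cast
    calc ∑ j, (A j : ℂ)
        = ∑ j, Complex.I * Complex.exp (((S / 2 : ℝ) : ℂ) * Complex.I) *
            (z j ^ (n - 1) * Lagrange.nodalWeight Finset.univ z j) := by
          refine Finset.sum_congr rfl fun j _ => ?_
          rw [hAc j, hu j]; ring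
      _ = Complex.I * Complex.exp (((S / 2 : ℝ) : ℂ) * Complex.I) *
            ∑ j, z j ^ (n - 1) * Lagrange.nodalWeight Finset.univ z j := by
          rw [← Finset.mul_sum]
      _ = 0 := by rw [hk1, mul_zero]
  have hS2 : ∑ j, (A j : ℂ) * Complex.exp (((((n:ℝ) - 1) * α j : ℝ) : ℂ) * Complex.I) = 0 := by
    calc ∑ j, (A j : ℂ) * Complex.exp (((((n:ℝ) - 1) * α j : ℝ) : ℂ) * Complex.I)
        = ∑ j, Complex.I * Complex.exp (((S / 2 : ℝ) : ℂ) * Complex.I) *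
            (z j ^ (2 * n - 2) * Lagrange.nodalWeight Finset.univ z j) := by
          refine Finset.sum_congr rfl fun j _ => ?_
          rw [hAc j, hu j, show (2 * n - 2) = (n - 1) + (n - 1) by omega, pow_add]
          ring
      _ = Complex.I * Complex.exp (((S / 2 : ℝ) : ℂ) * Complex.I) *
            ∑ j, z j ^ (2 * n - 2) * Lagrange.nodalWeight Finset.univ z j := by
          rw [← Finset.mul_sum]
      _ = 0 := by rw [hk2, mul_zero]
  have hS2' : ((∑ j, A j * Real.cos (((n : ℝ) - 1) * α j) : ℝ) : ℂ) +
      ((∑ j, A j * Real.sin (((n : ℝ) - 1) * α j) : ℝ) : ℂ) * Complex.I = 0 := by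
    rw [← hS2]
    push_cast
    rw [Finset.sum_mul, ← Finset.sum_add_distrib]
    refine Finset.sum_congr rfl fun j _ => ?_
    rw [Complex.exp_mul_I]
    ring
  refine ⟨by exact_mod_cast hS1, ?_, ?_⟩
  · simpa only [Complex.add_re, Complex.mul_re, Complex.ofReal_re, Complex.ofReal_im,
      Complex.I_re, Complex.I_im, Complex.zero_re, mul_zero, zero_mul, mul_one, zero_sub,
      sub_zero, neg_zero, add_zero] using congrArg Complex.re hS2'
  · simpa only [Complex.add_im, Complex.mul_im, Complex.ofReal_re, Complex.ofReal_im,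
      Complex.I_re, Complex.I_im, Complex.zero_im, mul_zero, zero_mul, mul_one, zero_add,
      add_zero] using congrArg Complex.im hS2'
end
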